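/- Let σ : ℝ → ℝ be smooth with σ(t) ≠ 0 for all t, and let g₁, g₂ : ℝ → ℝ be smooth. Then the Lie bracket of the vector fields Y(g₁) and Y(g₂) on ℝ⁴ equals X(f), where f(t) := −(1/(2σ(t)))(g₁(t) g₂'(t) − g₁'(t) g₂(t)). In particular, the symmetry algebra of the generalized Burgers equation ∂x(∂t u + u ∂x u − ∂x² u) + σ(t) ∂y² u = 0, realized by the fields X(f) + Y(g), has a non-Abelian Kac–Moody structure. -/

import Mathlib

/-- Lie bracket of vector fields on `ℝ⁴`, identified with smooth maps `ℝ⁴ → ℝ⁴`: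
`[V,W](p) = DW(p)(V(p)) − DV(p)(W(p))`. -/
noncomputable def VBracket (V W : ℝ × ℝ × ℝ × ℝ → ℝ × ℝ × ℝ × ℝ) :
    ℝ × ℝ × ℝ × ℝ → ℝ × ℝ × ℝ × ℝ :=
  fun p => fderiv ℝ W p (V p) - fderiv ℝ V p (W p)

/-- The vector field `X(f) = f(t)∂x + f'(t)∂u` in coordinates `(x,y,t,u)`. -/
noncomputable def Xfield (f : ℝ → ℝ) : ℝ × ℝ × ℝ × ℝ → ℝ × ℝ × ℝ × ℝ :=
  fun p => (f p.2.2.1, 0, 0, deriv f p.2.2.1)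

/-- The vector field
`Y(g) = g(t)∂y − (g'(t)/(2σ(t))) y ∂x − (d/dt)(g'(t)/(2σ(t))) y ∂u`
in coordinates `(x,y,t,u)`. -/
noncomputable def Yfield (σ g : ℝ → ℝ) : ℝ × ℝ × ℝ × ℝ → ℝ × ℝ × ℝ × ℝ :=
  fun p =>
    (-(deriv g p.2.2.1 / (2 * σ p.2.2.1)) * p.2.1,
     g p.2.2.1,
     0,
     -(deriv (fun s => deriv g s / (2 * σ s)) p.2.2.1) * p.2.1)

lemma fderiv_Y_apply (a b g : ℝ → ℝ) (x y t u vx vy vu : ℝ)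
    (ha : DifferentiableAt ℝ a t) (hb : DifferentiableAt ℝ b t)
    (hg : DifferentiableAt ℝ g t) :
    fderiv ℝ (fun p : ℝ × ℝ × ℝ × ℝ =>
        (-(a p.2.2.1) * p.2.1, g p.2.2.1, (0:ℝ), -(b p.2.2.1) * p.2.1))
      (x, y, t, u) (vx, vy, 0, vu)
      = (-(a t) * vy, 0, 0, -(b t) * vy) := by
  set πt : (ℝ × ℝ × ℝ × ℝ) →L[ℝ] ℝ :=
    (ContinuousLinearMap.fst ℝ ℝ ℝ).comp
      ((ContinuousLinearMap.snd ℝ ℝ (ℝ × ℝ)).comp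
        (ContinuousLinearMap.snd ℝ ℝ (ℝ × ℝ × ℝ))) with hπt
  set πy : (ℝ × ℝ × ℝ × ℝ) →L[ℝ] ℝ :=
    ((ContinuousLinearMap.fst ℝ ℝ (ℝ × ℝ)).comp
      (ContinuousLinearMap.snd ℝ ℝ (ℝ × ℝ × ℝ))) with hπy
  have hπtd : HasFDerivAt (fun p : ℝ × ℝ × ℝ × ℝ => p.2.2.1) πt (x, y, t, u) :=
    πt.hasFDerivAt
  have hπyd : HasFDerivAt (fun p : ℝ × ℝ × ℝ × ℝ => p.2.1) πy (x, y, t, u) :=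
    πy.hasFDerivAt
  have hA : HasFDerivAt (fun p : ℝ × ℝ × ℝ × ℝ => a p.2.2.1)
      (deriv a t • πt) (x, y, t, u) :=
    ha.hasDerivAt.comp_hasFDerivAt _ hπtd
  have hB : HasFDerivAt (fun p : ℝ × ℝ × ℝ × ℝ => b p.2.2.1)
      (deriv b t • πt) (x, y, t, u) :=
    hb.hasDerivAt.comp_hasFDerivAt _ hπtd
  have hG : HasFDerivAt (fun p : ℝ × ℝ × ℝ × ℝ => g p.2.2.1)
      (deriv g t • πt) (x, y, t, u) :=
    hg.hasDerivAt.comp_hasFDerivAt _ hπtd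
  have h1 : HasFDerivAt (fun p : ℝ × ℝ × ℝ × ℝ => -(a p.2.2.1) * p.2.1) _ (x, y, t, u) :=
    hA.neg.mul hπyd
  have h4 : HasFDerivAt (fun p : ℝ × ℝ × ℝ × ℝ => -(b p.2.2.1) * p.2.1) _ (x, y, t, u) :=
    hB.neg.mul hπyd
  have h3 : HasFDerivAt (fun _ : ℝ × ℝ × ℝ × ℝ => (0:ℝ))
      (0 : (ℝ × ℝ × ℝ × ℝ) →L[ℝ] ℝ) (x, y, t, u) := hasFDerivAt_const _ _
  have H := h1.prodMk (hG.prodMk (h3.prodMk h4))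
  rw [H.fderiv]
  simp [hπt, hπy]

theorem stmt15 (σ : ℝ → ℝ) (hσ : ContDiff ℝ (⊤ : ℕ∞) σ) (hσ0 : ∀ t, σ t ≠ 0)
    (g₁ g₂ : ℝ → ℝ)
    (hg₁ : ContDiff ℝ (⊤ : ℕ∞) g₁) (hg₂ : ContDiff ℝ (⊤ : ℕ∞) g₂) :
    VBracket (Yfield σ g₁) (Yfield σ g₂)
      = Xfield (fun t => -(1 / (2 * σ t)) * (g₁ t * deriv g₂ t - deriv g₁ t * g₂ t)) := by
  have dtop : ∀ f : ℝ → ℝ, ContDiff ℝ (⊤:ℕ∞) f → Differentiable ℝ f :=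
    fun f hf => hf.differentiable (by simp)
  have h2σ : ∀ t, (2:ℝ) * σ t ≠ 0 := fun t => mul_ne_zero two_ne_zero (hσ0 t)
  set q₁ : ℝ → ℝ := fun s => deriv g₁ s / (2 * σ s) with hq₁def
  set q₂ : ℝ → ℝ := fun s => deriv g₂ s / (2 * σ s) with hq₂def
  have hdg₁ : ContDiff ℝ (⊤:ℕ∞) (deriv g₁) := (contDiff_infty_iff_deriv.mp hg₁).2
  have hdg₂ : ContDiff ℝ (⊤:ℕ∞) (deriv g₂) := (contDiff_infty_iff_deriv.mp hg₂).2
  have hq₁ : ContDiff ℝ (⊤:ℕ∞) q₁ := hdg₁.div (contDiff_const.mul hσ) h2σ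
  have hq₂ : ContDiff ℝ (⊤:ℕ∞) q₂ := hdg₂.div (contDiff_const.mul hσ) h2σ
  have hdq₁ : ContDiff ℝ (⊤:ℕ∞) (deriv q₁) := (contDiff_infty_iff_deriv.mp hq₁).2
  have hdq₂ : ContDiff ℝ (⊤:ℕ∞) (deriv q₂) := (contDiff_infty_iff_deriv.mp hq₂).2
  funext p
  obtain ⟨x, y, t, u⟩ := p
  have e2 : fderiv ℝ (Yfield σ g₂) (x,y,t,u) (Yfield σ g₁ (x,y,t,u))
      = (-(q₂ t) * g₁ t, 0, 0, -(deriv q₂ t) * g₁ t) :=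
    fderiv_Y_apply q₂ (deriv q₂) g₂ x y t u _ (g₁ t) _
      (dtop _ hq₂ t) (dtop _ hdq₂ t)
      (dtop _ hg₂ t)
  have e1 : fderiv ℝ (Yfield σ g₁) (x,y,t,u) (Yfield σ g₂ (x,y,t,u))
      = (-(q₁ t) * g₂ t, 0, 0, -(deriv q₁ t) * g₂ t) :=
    fderiv_Y_apply q₁ (deriv q₁) g₁ x y t u _ (g₂ t) _
      (dtop _ hq₁ t) (dtop _ hdq₁ t)
      (dtop _ hg₁ t)
  have hfeq : (fun s => -(1 / (2 * σ s)) * (g₁ s * deriv g₂ s - deriv g₁ s * g₂ s))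
      = fun s => -(g₁ s * q₂ s) + q₁ s * g₂ s := by
    funext s
    rw [hq₁def, hq₂def]
    field_simp
    ring
  have hD : HasDerivAt (fun s => -(g₁ s * q₂ s) + q₁ s * g₂ s)
      (-(deriv g₁ t * q₂ t + g₁ t * deriv q₂ t)
        + (deriv q₁ t * g₂ t + q₁ t * deriv g₂ t)) t :=
    (((dtop _ hg₁ t).hasDerivAt.mul
        (dtop _ hq₂ t).hasDerivAt).neg).add
      ((dtop _ hq₁ t).hasDerivAt.mul
        (dtop _ hg₂ t).hasDerivAt)
  have hderivf : deriv (fun s => -(1 / (2 * σ s)) * (g₁ s * deriv g₂ s - deriv g₁ s * g₂ s)) t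
      = -(deriv g₁ t * q₂ t + g₁ t * deriv q₂ t)
        + (deriv q₁ t * g₂ t + q₁ t * deriv g₂ t) := by
    rw [hfeq]; exact hD.deriv
  have hx : deriv g₁ t * q₂ t = q₁ t * deriv g₂ t := by
    rw [hq₁def, hq₂def]; ring
  show fderiv ℝ (Yfield σ g₂) (x,y,t,u) (Yfield σ g₁ (x,y,t,u))
      - fderiv ℝ (Yfield σ g₁) (x,y,t,u) (Yfield σ g₂ (x,y,t,u)) = _
  rw [e1, e2]
  show (_ , _, _, _) = Xfield _ (x,y,t,u)
  simp only [Xfield, Prod.mk_sub_mk, hderivf]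
  refine Prod.ext ?_ (Prod.ext (by simp) (Prod.ext (by simp) ?_))
  · simp only [hq₁def, hq₂def]
    field_simp
    ring
  · simp only
    rw [← hx]
    ring
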